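/- At a non-null point (n2 ≠ 0) with m = dim V > 1, assume the background junction conditions hold, which at non-null points force [Y] = 0, and let δτ be the linearization of the shell tensor: δτ^{ab} = −n^a n^b(δP^{cd}[Y]_{cd} + P^{cd}[δY]_{cd}) + (n^a P^{bc} + n^b P^{ac})(δn^d[Y]_{cd} + n^d[δY]_{cd}) − P^{ac}P^{bd}(δn2·[Y]_{cd} + n2·[δY]_{cd}) − P^{ab}(−n2(δP^{cd}[Y]_{cd} + P^{cd}[δY]_{cd}) + n^c n^d[δY]_{cd}). With [Y] = 0 this reduces to δτ^{ab} = (n^a P^{bc} + n^b P^{ac}) n^d[δY]_{cd} − n2·P^{ac}P^{bd}[δY]_{cd} − P^{ab}(−n2·P^{cd}[δY]_{cd} + n^c n^d[δY]_{cd}). Then δτ = 0 if and only if [δY] = 0, provided additionally that the map X ↦ P(h(X,·),·)♯ together with n spans V (equivalently, relations (i)–(iv) hold and n2 ≠ 0). -/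

import Mathlib

lemma contract_aux {m : ℕ} (h P : Fin m → Fin m → ℝ) (l n : Fin m → ℝ)
    (hP : ∀ a b, (∑ c, h a c * P c b) = (if a = b then (1:ℝ) else 0) - l a * n b)
    (g : Fin m → ℝ) (a : Fin m) :
    (∑ c, h a c * (∑ e, P c e * g e)) = g a - l a * (∑ e, n e * g e) := by
  calc (∑ c, h a c * (∑ e, P c e * g e))
      = ∑ c, ∑ e, (h a c * P c e) * g e := by
        refine Finset.sum_congr rfl fun c _ => ?_
        rw [Finset.mul_sum]
        exact Finset.sum_congr rfl fun e _ => by ring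
    _ = ∑ e, ∑ c, (h a c * P c e) * g e := Finset.sum_comm
    _ = ∑ e, (∑ c, h a c * P c e) * g e := by
        refine Finset.sum_congr rfl fun e _ => ?_
        rw [Finset.sum_mul]
    _ = ∑ e, ((if a = e then (1:ℝ) else 0) - l a * n e) * g e := by
        refine Finset.sum_congr rfl fun e _ => ?_
        rw [hP]
    _ = ∑ e, ((if a = e then g e else 0) - l a * (n e * g e)) := by
        refine Finset.sum_congr rfl fun e _ => ?_
        by_cases hae : a = e <;> simp [hae] <;> ring
    _ = (∑ e, if a = e then g e else 0) - ∑ e, l a * (n e * g e) := Finset.sum_sub_distrib _ _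
    _ = g a - l a * (∑ e, n e * g e) := by
        rw [Finset.sum_ite_eq, ← Finset.mul_sum]
        simp

lemma key_aux {m : ℕ} (h P δY : Fin m → Fin m → ℝ) (l n : Fin m → ℝ) (n2 t q : ℝ)
    (Psymm : ∀ a b, P a b = P b a)
    (hPn : ∀ a, (∑ c, h a c * n c) = -(n2 * l a))
    (hP : ∀ a b, (∑ c, h a c * P c b) = (if a = b then (1:ℝ) else 0) - l a * n b)
    (w : Fin m → ℝ) (hw : ∀ e, w e = ∑ f, n f * δY e f)
    (hwsym : ∀ b, (∑ e, n e * δY e b) = w b)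
    (hq : (∑ e, n e * w e) = q)
    (hτ0 : ∀ c d, -(n c * n d) * t + (∑ e, (n c * P d e + n d * P c e) * w e)
        - (∑ e, ∑ f, P c e * P d f * (n2 * δY e f)) - P c d * (-n2 * t + q) = 0)
    (a b : Fin m) : n2 * δY a b = (n2 * t - q) * h a b := by
  have hA2 : ∀ c d : Fin m, (∑ e, (n c * P d e + n d * P c e) * w e)
      = n c * (∑ e, P d e * w e) + n d * (∑ e, P c e * w e) := by
    intro c d
    rw [Finset.mul_sum, Finset.mul_sum, ← Finset.sum_add_distrib]
    exact Finset.sum_congr rfl fun e _ => by ring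
  have hA3 : ∀ c d : Fin m, (∑ e, ∑ f, P c e * P d f * (n2 * δY e f))
      = n2 * ∑ f, P d f * (∑ e, P c e * δY e f) := by
    intro c d
    rw [Finset.sum_comm, Finset.mul_sum]
    refine Finset.sum_congr rfl fun f _ => ?_
    rw [Finset.mul_sum, Finset.mul_sum]
    exact Finset.sum_congr rfl fun e _ => by ring
  have hPwn : ∀ c : Fin m, (∑ f, n f * (∑ e, P c e * δY e f)) = ∑ e, P c e * w e := by
    intro c
    calc (∑ f, n f * (∑ e, P c e * δY e f))
        = ∑ f, ∑ e, n f * (P c e * δY e f) := by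
          refine Finset.sum_congr rfl fun f _ => ?_
          rw [Finset.mul_sum]
      _ = ∑ e, ∑ f, n f * (P c e * δY e f) := Finset.sum_comm
      _ = ∑ e, P c e * w e := by
          refine Finset.sum_congr rfl fun e _ => ?_
          rw [hw e, Finset.mul_sum]
          exact Finset.sum_congr rfl fun f _ => by ring
  -- inner sum over d, for fixed c
  have hinner : ∀ c : Fin m,
      (∑ d, h b d * (-(n c * n d) * t + (∑ e, (n c * P d e + n d * P c e) * w e)
        - (∑ e, ∑ f, P c e * P d f * (n2 * δY e f)) - P c d * (-n2 * t + q)))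
      = n c * t * (n2 * l b) + (n c * (w b - l b * q) + (∑ e, P c e * w e) * (-(n2 * l b)))
        - n2 * ((∑ e, P c e * δY e b) - l b * (∑ e, P c e * w e))
        - ((if b = c then (1:ℝ) else 0) - l b * n c) * (-n2 * t + q) := by
    intro c
    have J1 : (∑ d, h b d * (-(n c * n d) * t)) = n c * t * (n2 * l b) := by
      calc (∑ d, h b d * (-(n c * n d) * t))
          = ∑ d, (-(n c * t)) * (h b d * n d) := Finset.sum_congr rfl fun d _ => by ring
        _ = (-(n c * t)) * ∑ d, h b d * n d := by rw [← Finset.mul_sum]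
        _ = n c * t * (n2 * l b) := by rw [hPn b]; ring
    have J2 : (∑ d, h b d * (∑ e, (n c * P d e + n d * P c e) * w e))
        = n c * (w b - l b * q) + (∑ e, P c e * w e) * (-(n2 * l b)) := by
      calc (∑ d, h b d * (∑ e, (n c * P d e + n d * P c e) * w e))
          = ∑ d, h b d * (n c * (∑ e, P d e * w e) + n d * (∑ e, P c e * w e)) := by
            refine Finset.sum_congr rfl fun d _ => ?_
            rw [hA2]
        _ = ∑ d, (n c * (h b d * (∑ e, P d e * w e)) + (∑ e, P c e * w e) * (h b d * n d)) := by
            refine Finset.sum_congr rfl fun d _ => ?_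
            ring
        _ = n c * (∑ d, h b d * (∑ e, P d e * w e)) + (∑ e, P c e * w e) * (∑ d, h b d * n d) := by
            rw [Finset.sum_add_distrib, ← Finset.mul_sum, ← Finset.mul_sum]
        _ = n c * (w b - l b * q) + (∑ e, P c e * w e) * (-(n2 * l b)) := by
            rw [contract_aux h P l n hP w b, hq, hPn b]
    have J3 : (∑ d, h b d * (∑ e, ∑ f, P c e * P d f * (n2 * δY e f)))
        = n2 * ((∑ e, P c e * δY e b) - l b * (∑ e, P c e * w e)) := by
      calc (∑ d, h b d * (∑ e, ∑ f, P c e * P d f * (n2 * δY e f)))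
          = ∑ d, n2 * (h b d * (∑ f, P d f * (∑ e, P c e * δY e f))) := by
            refine Finset.sum_congr rfl fun d _ => ?_
            rw [hA3]; ring
        _ = n2 * ∑ d, h b d * (∑ f, P d f * (∑ e, P c e * δY e f)) := by
            rw [← Finset.mul_sum]
        _ = n2 * ((∑ e, P c e * δY e b) - l b * (∑ e, P c e * w e)) := by
            rw [contract_aux h P l n hP (fun f => ∑ e, P c e * δY e f) b, hPwn c]
    have J4 : (∑ d, h b d * (P c d * (-n2 * t + q)))
        = ((if b = c then (1:ℝ) else 0) - l b * n c) * (-n2 * t + q) := by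
      calc (∑ d, h b d * (P c d * (-n2 * t + q)))
          = ∑ d, (h b d * P d c) * (-n2 * t + q) := by
            refine Finset.sum_congr rfl fun d _ => ?_
            rw [Psymm c d]; ring
        _ = (∑ d, h b d * P d c) * (-n2 * t + q) := by rw [← Finset.sum_mul]
        _ = ((if b = c then (1:ℝ) else 0) - l b * n c) * (-n2 * t + q) := by rw [hP b c]
    calc (∑ d, h b d * (-(n c * n d) * t + (∑ e, (n c * P d e + n d * P c e) * w e)
          - (∑ e, ∑ f, P c e * P d f * (n2 * δY e f)) - P c d * (-n2 * t + q)))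
        = ∑ d, (h b d * (-(n c * n d) * t) + h b d * (∑ e, (n c * P d e + n d * P c e) * w e)
          - h b d * (∑ e, ∑ f, P c e * P d f * (n2 * δY e f)) - h b d * (P c d * (-n2 * t + q))) := by
          refine Finset.sum_congr rfl fun d _ => ?_
          ring
      _ = (∑ d, h b d * (-(n c * n d) * t)) + (∑ d, h b d * (∑ e, (n c * P d e + n d * P c e) * w e))
          - (∑ d, h b d * (∑ e, ∑ f, P c e * P d f * (n2 * δY e f)))
          - (∑ d, h b d * (P c d * (-n2 * t + q))) := by
          rw [Finset.sum_sub_distrib, Finset.sum_sub_distrib, Finset.sum_add_distrib]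
      _ = _ := by rw [J1, J2, J3, J4]
  -- each inner sum is zero
  have hvec : ∀ c : Fin m,
      n c * t * (n2 * l b) + (n c * (w b - l b * q) + (∑ e, P c e * w e) * (-(n2 * l b)))
        - n2 * ((∑ e, P c e * δY e b) - l b * (∑ e, P c e * w e))
        - ((if b = c then (1:ℝ) else 0) - l b * n c) * (-n2 * t + q) = 0 := by
    intro c
    have h2 : (∑ d, h b d * (-(n c * n d) * t + (∑ e, (n c * P d e + n d * P c e) * w e)
        - (∑ e, ∑ f, P c e * P d f * (n2 * δY e f)) - P c d * (-n2 * t + q))) = 0 :=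
      Finset.sum_eq_zero fun d _ => by rw [hτ0 c d, mul_zero]
    rw [← hinner c]
    exact h2
  -- contract with h a · over c
  have hstep : (∑ c, h a c * (n2 * (∑ e, P c e * δY e b)))
      = ∑ c, h a c * (n c * t * (n2 * l b) + n c * (w b - l b * q)
          - ((if b = c then (1:ℝ) else 0) - l b * n c) * (-n2 * t + q)) := by
    refine Finset.sum_congr rfl fun c _ => ?_
    have := hvec c
    have h3 : n2 * (∑ e, P c e * δY e b) = n c * t * (n2 * l b) + n c * (w b - l b * q)
        - ((if b = c then (1:ℝ) else 0) - l b * n c) * (-n2 * t + q) := by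
      linear_combination -this
    rw [h3]
  have hL : (∑ c, h a c * (n2 * (∑ e, P c e * δY e b))) = n2 * (δY a b - l a * w b) := by
    calc (∑ c, h a c * (n2 * (∑ e, P c e * δY e b)))
        = n2 * ∑ c, h a c * (∑ e, P c e * δY e b) := by
          rw [Finset.mul_sum]
          exact Finset.sum_congr rfl fun c _ => by ring
      _ = n2 * (δY a b - l a * (∑ e, n e * δY e b)) := by
          rw [contract_aux h P l n hP (fun e => δY e b) a]
      _ = n2 * (δY a b - l a * w b) := by rw [hwsym b]
  have hite : (∑ c, h a c * (if b = c then (1:ℝ) else 0)) = h a b := by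
    simp [mul_ite]
  have hR : (∑ c, h a c * (n c * t * (n2 * l b) + n c * (w b - l b * q)
        - ((if b = c then (1:ℝ) else 0) - l b * n c) * (-n2 * t + q)))
      = (-(n2 * l a)) * (t * (n2 * l b) + (w b - l b * q) + l b * (-n2 * t + q))
        - h a b * (-n2 * t + q) := by
    calc (∑ c, h a c * (n c * t * (n2 * l b) + n c * (w b - l b * q)
          - ((if b = c then (1:ℝ) else 0) - l b * n c) * (-n2 * t + q)))
        = ∑ c, ((h a c * n c) * (t * (n2 * l b) + (w b - l b * q) + l b * (-n2 * t + q))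
            - (h a c * (if b = c then (1:ℝ) else 0)) * (-n2 * t + q)) := by
          refine Finset.sum_congr rfl fun c _ => ?_
          ring
      _ = (∑ c, (h a c * n c) * (t * (n2 * l b) + (w b - l b * q) + l b * (-n2 * t + q)))
            - (∑ c, (h a c * (if b = c then (1:ℝ) else 0)) * (-n2 * t + q)) := Finset.sum_sub_distrib _ _
      _ = (∑ c, h a c * n c) * (t * (n2 * l b) + (w b - l b * q) + l b * (-n2 * t + q))
            - (∑ c, h a c * (if b = c then (1:ℝ) else 0)) * (-n2 * t + q) := by
          rw [← Finset.sum_mul, ← Finset.sum_mul]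
      _ = _ := by rw [hPn a, hite]
  have final : n2 * (δY a b - l a * w b)
      = (-(n2 * l a)) * (t * (n2 * l b) + (w b - l b * q) + l b * (-n2 * t + q))
        - h a b * (-n2 * t + q) := by
    rw [← hL, hstep, hR]
  linear_combination final



/-- First-order junction conditions at a NON-NULL point (n2 ≠ 0): with the background
junction conditions forcing [Y] = 0, the linearized shell δτ vanishes iff [δY] = 0. -/
theorem stmt_15
    (m : ℕ) (hm : 1 < m)
    (h P : Fin m → Fin m → ℝ) (l n : Fin m → ℝ) (l2 n2 : ℝ)
    (hsymm : ∀ a b, h a b = h b a)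
    (Psymm : ∀ a b, P a b = P b a)
    (c1 : ∀ a b, (∑ c, P a c * h c b) + n a * l b = if a = b then (1 : ℝ) else 0)
    (c2 : ∀ a, (∑ b, P a b * l b) + l2 * n a = 0)
    (c3 : (∑ a, n a * l a) + n2 * l2 = 1)
    (c4 : ∀ a, (∑ b, h a b * n b) + n2 * l a = 0)
    (hnn : n2 ≠ 0)
    -- background jump [Y] (the background junction conditions force it to vanish):
    (YB : Fin m → Fin m → ℝ) (hYB : ∀ a b, YB a b = 0)
    -- perturbations: δP, δn, δn2 of the inverse data, and the jump [δY]: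
    (δP : Fin m → Fin m → ℝ) (δPsymm : ∀ a b, δP a b = δP b a)
    (δn : Fin m → ℝ) (δn2 : ℝ)
    (δY : Fin m → Fin m → ℝ) (δYsymm : ∀ a b, δY a b = δY b a) :
    let δτ : Fin m → Fin m → ℝ := fun a b =>
      -(n a * n b) * ((∑ c, ∑ d, δP c d * YB c d) + (∑ c, ∑ d, P c d * δY c d))
      + (∑ c, (n a * P b c + n b * P a c)
          * ((∑ d, δn d * YB c d) + (∑ d, n d * δY c d)))
      - (∑ c, ∑ d, P a c * P b d * (δn2 * YB c d + n2 * δY c d))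
      - P a b * (-(n2) * ((∑ c, ∑ d, δP c d * YB c d) + (∑ c, ∑ d, P c d * δY c d))
          + (∑ c, ∑ d, n c * n d * δY c d))
    (∀ a b, δτ a b = 0) ↔ (∀ a b, δY a b = 0) := by

  intro δτ
  constructor
  · intro hτ
    set t := ∑ c, ∑ d, P c d * δY c d with htdef
    set q := ∑ c, ∑ d, n c * n d * δY c d with hqdef
    have hPn : ∀ a, (∑ c, h a c * n c) = -(n2 * l a) := fun a => by
      have := c4 a; linarith
    have hP' : ∀ a b, (∑ c, h a c * P c b) = (if a = b then (1:ℝ) else 0) - l a * n b := by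
      intro a b
      have h1 : (∑ c, h a c * P c b) = ∑ c, P b c * h c a :=
        Finset.sum_congr rfl fun c _ => by rw [hsymm a c, Psymm c b]; ring
      have h2 := c1 b a
      rw [h1]
      by_cases hab : a = b
      · subst hab; simp only [if_pos rfl] at h2 ⊢; linarith
      · have hba : ¬ b = a := fun hh => hab hh.symm
        simp only [if_neg hab, if_neg hba] at h2 ⊢; linarith
    have hτ0 : ∀ c d, -(n c * n d) * t
        + (∑ e, (n c * P d e + n d * P c e) * (∑ f, n f * δY e f))
        - (∑ e, ∑ f, P c e * P d f * (n2 * δY e f))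
        - P c d * (-n2 * t + q) = 0 := by
      intro c d
      have hb : -(n c * n d) * ((∑ e, ∑ f, δP e f * YB e f) + (∑ e, ∑ f, P e f * δY e f))
          + (∑ e, (n c * P d e + n d * P c e)
              * ((∑ f, δn f * YB e f) + (∑ f, n f * δY e f)))
          - (∑ e, ∑ f, P c e * P d f * (δn2 * YB e f + n2 * δY e f))
          - P c d * (-(n2) * ((∑ e, ∑ f, δP e f * YB e f) + (∑ e, ∑ f, P e f * δY e f))
              + (∑ e, ∑ f, n e * n f * δY e f)) = 0 := hτ c d
      simp only [hYB, mul_zero, zero_mul, Finset.sum_const_zero, zero_add, add_zero] at hb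
      exact hb
    have hwsym : ∀ b, (∑ e, n e * δY e b) = (fun e => ∑ f, n f * δY e f) b := fun b =>
      Finset.sum_congr rfl fun e _ => by rw [δYsymm]
    have hq' : (∑ e, n e * ((fun e => ∑ f, n f * δY e f) e)) = q := by
      rw [hqdef]
      refine Finset.sum_congr rfl fun e _ => ?_
      rw [Finset.mul_sum]
      exact Finset.sum_congr rfl fun f _ => by ring
    have key : ∀ a b, n2 * δY a b = (n2 * t - q) * h a b :=
      key_aux h P δY l n n2 t q Psymm hPn hP'
        (fun e => ∑ f, n f * δY e f) (fun e => rfl) hwsym hq' hτ0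
    -- contraction with n ⊗ n
    have e_q : n2 * q = -(((n2 * t - q) * n2)) * (∑ i, n i * l i) := by
      calc n2 * q = ∑ a, ∑ b, n a * n b * (n2 * δY a b) := by
            rw [hqdef, Finset.mul_sum]
            refine Finset.sum_congr rfl fun a _ => ?_
            rw [Finset.mul_sum]
            exact Finset.sum_congr rfl fun b _ => by ring
        _ = ∑ a, ∑ b, n a * n b * ((n2 * t - q) * h a b) :=
            Finset.sum_congr rfl fun a _ => Finset.sum_congr rfl fun b _ => by rw [key a b]
        _ = ∑ a, ((n2 * t - q) * n a) * (-(n2 * l a)) := by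
            refine Finset.sum_congr rfl fun a _ => ?_
            calc (∑ b, n a * n b * ((n2 * t - q) * h a b))
                = ∑ b, ((n2 * t - q) * n a) * (h a b * n b) :=
                  Finset.sum_congr rfl fun b _ => by ring
              _ = ((n2 * t - q) * n a) * (∑ b, h a b * n b) := by rw [← Finset.mul_sum]
              _ = ((n2 * t - q) * n a) * (-(n2 * l a)) := by rw [hPn a]
        _ = ∑ a, (-(((n2 * t - q) * n2))) * (n a * l a) :=
            Finset.sum_congr rfl fun a _ => by ring
        _ = -(((n2 * t - q) * n2)) * (∑ i, n i * l i) := by rw [← Finset.mul_sum]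
    -- contraction with P
    have e_t : n2 * t = (n2 * t - q) * ((m : ℝ) - ∑ i, n i * l i) := by
      have hPh : ∀ a, (∑ b, P a b * h b a) = 1 - n a * l a := by
        intro a
        have := c1 a a
        rw [if_pos rfl] at this
        linarith
      calc n2 * t = ∑ a, ∑ b, P a b * (n2 * δY a b) := by
            rw [htdef, Finset.mul_sum]
            refine Finset.sum_congr rfl fun a _ => ?_
            rw [Finset.mul_sum]
            exact Finset.sum_congr rfl fun b _ => by ring
        _ = ∑ a, ∑ b, P a b * ((n2 * t - q) * h a b) :=
            Finset.sum_congr rfl fun a _ => Finset.sum_congr rfl fun b _ => by rw [key a b]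
        _ = ∑ a, (n2 * t - q) * (1 - n a * l a) := by
            refine Finset.sum_congr rfl fun a _ => ?_
            calc (∑ b, P a b * ((n2 * t - q) * h a b))
                = ∑ b, (n2 * t - q) * (P a b * h b a) :=
                  Finset.sum_congr rfl fun b _ => by rw [hsymm a b]; ring
              _ = (n2 * t - q) * (∑ b, P a b * h b a) := by rw [← Finset.mul_sum]
              _ = (n2 * t - q) * (1 - n a * l a) := by rw [hPh a]
        _ = (n2 * t - q) * (∑ a, (1 - n a * l a)) := by rw [← Finset.mul_sum]
        _ = (n2 * t - q) * ((m : ℝ) - ∑ i, n i * l i) := by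
            congr 1
            rw [Finset.sum_sub_distrib]
            simp [Finset.card_univ]
    have hm1 : ((m : ℝ) - 1) ≠ 0 := by
      have : (1 : ℝ) < (m : ℝ) := by exact_mod_cast hm
      linarith
    have e3 : n2 * ((n2 * t - q) * ((m : ℝ) - 1)) = 0 := by
      linear_combination e_q - n2 * e_t
    have h4 : (n2 * t - q) * ((m : ℝ) - 1) = 0 := by
      rcases mul_eq_zero.mp e3 with h' | h'
      · exact absurd h' hnn
      · exact h'
    have hx : n2 * t - q = 0 := by
      rcases mul_eq_zero.mp h4 with h' | h'
      · exact h'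
      · exact absurd h' hm1
    intro a b
    have h5 := key a b
    rw [hx, zero_mul] at h5
    exact (mul_eq_zero.mp h5).resolve_left hnn
  · intro hY a b
    show -(n a * n b) * ((∑ c, ∑ d, δP c d * YB c d) + (∑ c, ∑ d, P c d * δY c d))
      + (∑ c, (n a * P b c + n b * P a c)
          * ((∑ d, δn d * YB c d) + (∑ d, n d * δY c d)))
      - (∑ c, ∑ d, P a c * P b d * (δn2 * YB c d + n2 * δY c d))
      - P a b * (-(n2) * ((∑ c, ∑ d, δP c d * YB c d) + (∑ c, ∑ d, P c d * δY c d))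
          + (∑ c, ∑ d, n c * n d * δY c d)) = 0
    simp [hYB, hY]
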